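/- Let A, C, M, r₀, δ₀ > 0 and B, E ∈ ℝ, and suppose f : ℂ × (0, δ₀) → ℂ has the form f(ω, δ) = −A ω² − i B ω³ + C δ + i E ω δ + r(ω, δ), where |r(ω, δ)| ≤ M (|ω|⁴ + δ |ω|² + δ²) whenever |ω| ≤ r₀ and 0 < δ < δ₀. Then there exist ε > 0 and constants c₁, c₂ > 0 such that for every δ ∈ (0, ε) and every ω ∈ ℂ with |ω| ≤ ε and f(ω, δ) = 0, one has c₁ δ ≤ |ω|² ≤ c₂ δ. -/
import Mathlib


/-- Let `f(ω, δ) = −Aω² − iBω³ + Cδ + iEωδ + r(ω, δ)` with `A, C > 0` and a remainder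
bounded by `M(|ω|⁴ + δ|ω|² + δ²)` for `|ω| ≤ r₀` and `0 < δ < δ₀`. Then there exist
`ε > 0` and constants `c₁, c₂ > 0` such that every zero `ω` of `f(·, δ)` with `|ω| ≤ ε`
and `δ ∈ (0, ε)` satisfies `c₁ δ ≤ |ω|² ≤ c₂ δ`. -/
theorem zeros_order_sqrt_delta
    (A C M r₀ δ₀ : ℝ) (B E : ℝ)
    (hA : 0 < A) (hC : 0 < C) (hM : 0 < M) (hr₀ : 0 < r₀) (hδ₀ : 0 < δ₀)
    (f r : ℂ → ℝ → ℂ)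
    (hf : ∀ (ω : ℂ) (δ : ℝ), 0 < δ → δ < δ₀ →
      f ω δ = -(A : ℂ) * ω ^ 2 - Complex.I * (B : ℂ) * ω ^ 3 + (C : ℂ) * (δ : ℂ)
        + Complex.I * (E : ℂ) * ω * (δ : ℂ) + r ω δ)
    (hr : ∀ (ω : ℂ) (δ : ℝ), ‖ω‖ ≤ r₀ → 0 < δ → δ < δ₀ →
      ‖r ω δ‖ ≤ M * (‖ω‖ ^ 4 + δ * ‖ω‖ ^ 2 + δ ^ 2)) :
    ∃ ε > 0, ∃ c₁ > 0, ∃ c₂ > 0, ∀ δ : ℝ, 0 < δ → δ < ε →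
      ∀ ω : ℂ, ‖ω‖ ≤ ε → f ω δ = 0 → c₁ * δ ≤ ‖ω‖ ^ 2 ∧ ‖ω‖ ^ 2 ≤ c₂ * δ := by
  set K : ℝ := |B| + |E| + M + 1 with hK
  have hK0 : 0 < K := by positivity
  refine ⟨min (min 1 (min δ₀ r₀)) (min (A / (6 * K)) (C / (4 * K))), ?_,
    C / (3 * A), by positivity, 4 * C / A, by positivity, ?_⟩
  · positivity
  intro δ hδ0 hδε ω hωε hzero
  set ε := min (min 1 (min δ₀ r₀)) (min (A / (6 * K)) (C / (4 * K))) with hε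
  have hε1 : ε ≤ 1 := le_trans (min_le_left _ _) (min_le_left _ _)
  have hεδ₀ : ε ≤ δ₀ := le_trans (min_le_left _ _) (le_trans (min_le_right _ _) (min_le_left _ _))
  have hεr₀ : ε ≤ r₀ := le_trans (min_le_left _ _) (le_trans (min_le_right _ _) (min_le_right _ _))
  have hεA : ε ≤ A / (6 * K) := le_trans (min_le_right _ _) (min_le_left _ _)
  have hεC : ε ≤ C / (4 * K) := le_trans (min_le_right _ _) (min_le_right _ _)
  have hδδ₀ : δ < δ₀ := lt_of_lt_of_le hδε hεδ₀
  have hωr₀ : ‖ω‖ ≤ r₀ := le_trans hωε hεr₀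
  set x := ‖ω‖ with hx
  have hx0 : 0 ≤ x := norm_nonneg ω
  have hfeq := hf ω δ hδ0 hδδ₀
  rw [hfeq] at hzero
  have heq : (A : ℂ) * ω ^ 2 - (C : ℂ) * (δ : ℂ) =
      -(Complex.I * (B : ℂ) * ω ^ 3) + Complex.I * (E : ℂ) * ω * (δ : ℂ) + r ω δ := by
    linear_combination -hzero
  have hnormL : |A * x ^ 2 - C * δ| ≤ ‖(A : ℂ) * ω ^ 2 - (C : ℂ) * (δ : ℂ)‖ := by
    have h1 : ‖(A : ℂ) * ω ^ 2‖ = A * x ^ 2 := by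
      rw [norm_mul, norm_pow, Complex.norm_real, Real.norm_eq_abs, abs_of_pos hA]
    have h2 : ‖(C : ℂ) * (δ : ℂ)‖ = C * δ := by
      rw [norm_mul, Complex.norm_real, Complex.norm_real, Real.norm_eq_abs, Real.norm_eq_abs, abs_of_pos hC, abs_of_pos hδ0]
    calc |A * x ^ 2 - C * δ| = |‖(A : ℂ) * ω ^ 2‖ - ‖(C : ℂ) * (δ : ℂ)‖| := by rw [h1, h2]
      _ ≤ _ := abs_norm_sub_norm_le _ _
  have hnormR : ‖(A : ℂ) * ω ^ 2 - (C : ℂ) * (δ : ℂ)‖ ≤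
      |B| * x ^ 3 + |E| * x * δ + M * (x ^ 4 + δ * x ^ 2 + δ ^ 2) := by
    rw [heq]
    have h3 : ‖-(Complex.I * (B : ℂ) * ω ^ 3)‖ = |B| * x ^ 3 := by
      rw [norm_neg, norm_mul, norm_mul, norm_pow, Complex.norm_I, Complex.norm_real, Real.norm_eq_abs, one_mul]
    have h4 : ‖Complex.I * (E : ℂ) * ω * (δ : ℂ)‖ = |E| * x * δ := by
      rw [norm_mul, norm_mul, norm_mul, Complex.norm_I, Complex.norm_real,
        Complex.norm_real, Real.norm_eq_abs, Real.norm_eq_abs, one_mul, abs_of_pos hδ0]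
    calc ‖_ + _ + _‖ ≤ ‖-(Complex.I * (B : ℂ) * ω ^ 3) + Complex.I * (E : ℂ) * ω * (δ : ℂ)‖
          + ‖r ω δ‖ := norm_add_le _ _
      _ ≤ ‖-(Complex.I * (B : ℂ) * ω ^ 3)‖ + ‖Complex.I * (E : ℂ) * ω * (δ : ℂ)‖ + ‖r ω δ‖ := by
          gcongr; exact norm_add_le _ _
      _ ≤ _ := by rw [h3, h4]; gcongr; exact hr ω δ hωr₀ hδ0 hδδ₀
  have habs : |A * x ^ 2 - C * δ| ≤ K * (x ^ 3 + x * δ + x ^ 4 + δ * x ^ 2 + δ ^ 2) := by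
    refine hnormL.trans (hnormR.trans ?_)
    have hB : |B| ≤ K := by rw [hK]; linarith [abs_nonneg E, hM.le]
    have hE : |E| ≤ K := by rw [hK]; linarith [abs_nonneg B, hM.le]
    have hMK : M ≤ K := by rw [hK]; linarith [abs_nonneg B, abs_nonneg E]
    have : |B| * x ^ 3 + |E| * x * δ + M * (x ^ 4 + δ * x ^ 2 + δ ^ 2)
        ≤ K * x ^ 3 + K * (x * δ) + K * (x ^ 4 + δ * x ^ 2 + δ ^ 2) := by
      have t1 : |B| * x ^ 3 ≤ K * x ^ 3 :=
        mul_le_mul_of_nonneg_right hB (pow_nonneg hx0 3)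
      have t2 : |E| * x * δ ≤ K * (x * δ) := by
        rw [mul_assoc]
        exact mul_le_mul_of_nonneg_right hE (mul_nonneg hx0 hδ0.le)
      have t3 : M * (x ^ 4 + δ * x ^ 2 + δ ^ 2) ≤ K * (x ^ 4 + δ * x ^ 2 + δ ^ 2) :=
        mul_le_mul_of_nonneg_right hMK (by positivity)
      linarith
    linarith [this, (by ring : K * x ^ 3 + K * (x * δ) + K * (x ^ 4 + δ * x ^ 2 + δ ^ 2)
      = K * (x ^ 3 + x * δ + x ^ 4 + δ * x ^ 2 + δ ^ 2))]
  clear_value K x ε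
  clear hf hr hfeq hzero heq hε hK hx
  have hxε : x ≤ ε := hωε
  have hδεle : δ ≤ ε := hδε.le
  have hε0 : 0 < ε := lt_of_lt_of_le hδ0 hδεle
  have hsum : K * (x ^ 3 + x * δ + x ^ 4 + δ * x ^ 2 + δ ^ 2) ≤ 3 * K * ε * x ^ 2 + 2 * K * ε * δ := by
    have h1 : x ^ 3 ≤ ε * x ^ 2 := by
      calc x ^ 3 = x * x ^ 2 := by ring
        _ ≤ ε * x ^ 2 := mul_le_mul_of_nonneg_right hxε (sq_nonneg x)
    have h2 : x ^ 4 ≤ ε * x ^ 2 := by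
      have hxx : x * x ≤ ε * 1 := mul_le_mul hxε (hxε.trans hε1) hx0 hε0.le
      calc x ^ 4 = (x * x) * x ^ 2 := by ring
        _ ≤ (ε * 1) * x ^ 2 := mul_le_mul_of_nonneg_right hxx (sq_nonneg x)
        _ = ε * x ^ 2 := by ring
    have h3 : δ * x ^ 2 ≤ ε * x ^ 2 := mul_le_mul_of_nonneg_right hδεle (sq_nonneg x)
    have h4 : x * δ ≤ ε * δ := mul_le_mul_of_nonneg_right hxε hδ0.le
    have h5 : δ ^ 2 ≤ ε * δ := by
      calc δ ^ 2 = δ * δ := by ring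
        _ ≤ ε * δ := mul_le_mul_of_nonneg_right hδεle hδ0.le
    have hs : x ^ 3 + x * δ + x ^ 4 + δ * x ^ 2 + δ ^ 2 ≤ 3 * ε * x ^ 2 + 2 * ε * δ := by linarith
    calc K * (x ^ 3 + x * δ + x ^ 4 + δ * x ^ 2 + δ ^ 2)
        ≤ K * (3 * ε * x ^ 2 + 2 * ε * δ) := mul_le_mul_of_nonneg_left hs hK0.le
      _ = 3 * K * ε * x ^ 2 + 2 * K * ε * δ := by ring
  have hKA : 3 * K * ε ≤ A / 2 := by
    have h : 6 * K * ε ≤ A := by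
      have := mul_le_mul_of_nonneg_left hεA (by positivity : (0:ℝ) ≤ 6 * K)
      rwa [mul_div_cancel₀ _ (by positivity : (6:ℝ) * K ≠ 0)] at this
    linarith
  have hKC : 2 * K * ε ≤ C / 2 := by
    have h : 4 * K * ε ≤ C := by
      have := mul_le_mul_of_nonneg_left hεC (by positivity : (0:ℝ) ≤ 4 * K)
      rwa [mul_div_cancel₀ _ (by positivity : (4:ℝ) * K ≠ 0)] at this
    linarith
  have hmain : |A * x ^ 2 - C * δ| ≤ (A / 2) * x ^ 2 + (C / 2) * δ := by
    refine (habs.trans (hsum.trans ?_))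
    have t1 : 3 * K * ε * x ^ 2 ≤ (A / 2) * x ^ 2 := mul_le_mul_of_nonneg_right hKA (sq_nonneg x)
    have t2 : 2 * K * ε * δ ≤ (C / 2) * δ := mul_le_mul_of_nonneg_right hKC hδ0.le
    linarith
  rw [abs_le] at hmain
  constructor
  · rw [div_mul_eq_mul_div, div_le_iff₀ (by positivity : (0:ℝ) < 3 * A)]
    linarith [hmain.1]
  · rw [div_mul_eq_mul_div, le_div_iff₀ hA]
    linarith [hmain.2, mul_pos hC hδ0]
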